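/- ∑_{n=1}^∞ H_n/n² = 2ζ(3), where H_n = ∑_{j=1}^n 1/j is the n-th harmonic number. -/

import Mathlib

open Finset Filter Topology

noncomputable def Fh : ℕ × ℕ → ℝ := fun p => 1 / ((p.1 : ℝ) * p.2 * (p.1 + p.2))

noncomputable def Gh : ℕ × ℕ → ℝ :=
  fun q => if q.2 < q.1 then 1 / ((q.2 : ℝ) * ((q.1 - q.2 : ℕ) : ℝ) * q.1) else 0

lemma Fh_nonneg (p : ℕ × ℕ) : 0 ≤ Fh p := by
  unfold Fh; positivity

lemma summable_Fh : Summable Fh := by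
  have hb : Summable fun p : ℕ × ℕ =>
      ((1:ℝ) / (p.1:ℝ) ^ ((3:ℝ)/2)) * ((1:ℝ) / (p.2:ℝ) ^ ((3:ℝ)/2)) := by
    apply Summable.mul_of_nonneg
      (Real.summable_one_div_nat_rpow.mpr (by norm_num))
      (Real.summable_one_div_nat_rpow.mpr (by norm_num))
    · intro n; positivity
    · intro n; positivity
  apply Summable.of_nonneg_of_le Fh_nonneg _ hb
  rintro ⟨m, n⟩
  rcases Nat.eq_zero_or_pos m with hm | hm
  · subst hm; simp [Fh]
  rcases Nat.eq_zero_or_pos n with hn | hn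
  · subst hn; simp [Fh]
  have hm1 : (1:ℝ) ≤ (m:ℝ) := by exact_mod_cast hm
  have hn1 : (1:ℝ) ≤ (n:ℝ) := by exact_mod_cast hn
  have hm0 : (0:ℝ) < m := by linarith
  have hn0 : (0:ℝ) < n := by linarith
  have h32 : ∀ x : ℝ, 0 < x → x ^ ((3:ℝ)/2) = x * Real.sqrt x := by
    intro x hx
    rw [show (3:ℝ)/2 = 1 + 1/2 by norm_num, Real.rpow_add hx, Real.rpow_one,
      Real.sqrt_eq_rpow]
  rw [h32 _ hm0, h32 _ hn0]
  have hsm := Real.sq_sqrt hm0.le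
  have hsn := Real.sq_sqrt hn0.le
  have hsm0 := Real.sqrt_nonneg (m:ℝ)
  have hsn0 := Real.sqrt_nonneg (n:ℝ)
  show 1 / ((m:ℝ) * n * (m + n)) ≤ _
  rw [div_mul_div_comm, one_mul]
  apply div_le_div_of_nonneg_left _ (by positivity) _
  · norm_num
  · nlinarith [mul_pos hm0 hn0, mul_pos (mul_pos hm0 hn0) (Real.sqrt_pos.mpr hm0),
      Real.sqrt_pos.mpr hm0, Real.sqrt_pos.mpr hn0,
      sq_nonneg (Real.sqrt (m:ℝ) - Real.sqrt (n:ℝ)),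
      mul_pos (Real.sqrt_pos.mpr hm0) (Real.sqrt_pos.mpr hn0)]

lemma inner_Fh (n : ℕ) :
    ∑' m : ℕ, Fh (n, m) = (∑ j ∈ Finset.Icc 1 n, (1 : ℝ) / j) / (n : ℝ) ^ 2 := by
  rcases Nat.eq_zero_or_pos n with hn | hn
  · subst hn; simp [Fh]
  have fm : Summable fun m => Fh (n, m) := summable_Fh.prod_factor n
  have hn0 : (0:ℝ) < n := by exact_mod_cast hn
  apply HasSum.tsum_eq
  rw [fm.hasSum_iff_tendsto_nat]
  set H := ∑ j ∈ Finset.Icc 1 n, (1:ℝ)/j with hH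
  have key : ∀ M, n + 1 ≤ M → ∑ m ∈ range M, Fh (n, m)
      = (H - ∑ m ∈ Ico M (M + n), (1:ℝ)/m) / (n:ℝ)^2 := by
    intro M hM
    have h1 : ∑ m ∈ range M, Fh (n, m) = ∑ m ∈ Ico 1 M, Fh (n, m) := by
      rw [range_eq_Ico, ← Finset.sum_Ico_consecutive _ (Nat.zero_le 1) (by omega)]
      simp [Fh]
    rw [h1]
    have h2 : ∀ m ∈ Ico 1 M, Fh (n, m) = ((1:ℝ)/m - 1/(m+n)) / (n:ℝ)^2 := by
      intro m hm
      simp only [mem_Ico] at hm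
      have hm0 : (0:ℝ) < m := by exact_mod_cast hm.1
      show 1 / ((n:ℝ) * m * (n + m)) = _
      field_simp
      ring
    rw [Finset.sum_congr rfl h2, ← Finset.sum_div, Finset.sum_sub_distrib]
    congr 1
    have h3 : ∑ m ∈ Ico 1 M, (1:ℝ)/(m + n) = ∑ m ∈ Ico (1+n) (M+n), (1:ℝ)/m := by
      rw [← Finset.sum_Ico_add]
      apply Finset.sum_congr rfl
      intro m _
      push_cast
      ring_nf
    rw [h3]
    have e1 : ∑ m ∈ Ico 1 (1+n), (1:ℝ)/m + ∑ m ∈ Ico (1+n) M, (1:ℝ)/m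
        = ∑ m ∈ Ico 1 M, (1:ℝ)/m := Finset.sum_Ico_consecutive _ (by omega) (by omega)
    have e2 : ∑ m ∈ Ico (1+n) M, (1:ℝ)/m + ∑ m ∈ Ico M (M+n), (1:ℝ)/m
        = ∑ m ∈ Ico (1+n) (M+n), (1:ℝ)/m := Finset.sum_Ico_consecutive _ (by omega) (by omega)
    have e3 : ∑ m ∈ Ico 1 (1+n), (1:ℝ)/m = H := by
      rw [hH]; congr 1
      rw [show 1 + n = n + 1 by omega, Finset.Ico_add_one_right_eq_Icc]
    linarith
  have hT : Tendsto (fun M => ∑ m ∈ Ico M (M+n), (1:ℝ)/m) atTop (𝓝 0) := by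
    apply squeeze_zero' (g := fun M : ℕ => (n:ℝ)/M)
    · filter_upwards with M
      positivity
    · filter_upwards [eventually_ge_atTop 1] with M hM
      calc ∑ m ∈ Ico M (M+n), (1:ℝ)/m ≤ (Ico M (M+n)).card • ((1:ℝ)/M) := by
            apply Finset.sum_le_card_nsmul
            intro x hx
            simp only [mem_Ico] at hx
            apply div_le_div_of_nonneg_left (by norm_num) (by exact_mod_cast hM) _
            exact_mod_cast hx.1
        _ = (n:ℝ)/M := by
            rw [Nat.card_Ico, Nat.add_sub_cancel_left, nsmul_eq_mul]
            ring
    · exact tendsto_const_div_atTop_nhds_zero_nat (n:ℝ)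
  have lim : Tendsto (fun M : ℕ => (H - ∑ m ∈ Ico M (M+n), (1:ℝ)/m) / (n:ℝ)^2) atTop
      (𝓝 (H / (n:ℝ)^2)) := by
    have := (tendsto_const_nhds (x := H) (f := atTop)).sub hT
    rw [sub_zero] at this
    exact this.div_const _
  apply lim.congr'
  filter_upwards [eventually_ge_atTop (n+1)] with M hM
  exact (key M hM).symm

lemma Gh_comp (p : ℕ × ℕ) : Gh (p.1 + p.2, p.1) = Fh p := by
  rcases p with ⟨n, m⟩
  rcases Nat.eq_zero_or_pos m with hm | hm
  · subst hm; simp [Gh, Fh]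
  · have h : n < n + m := by omega
    simp only [Gh, Fh, if_pos h, Nat.add_sub_cancel_left]
    push_cast
    ring_nf

lemma inner_Gh (k : ℕ) :
    ∑' n : ℕ, Gh (k, n) = 2 * ((∑ j ∈ Finset.Icc 1 k, (1 : ℝ) / j) / (k : ℝ) ^ 2)
      - 2 / (k : ℝ) ^ 3 := by
  rw [tsum_eq_sum (s := range k) (by
    intro n hn
    simp only [mem_range, not_lt] at hn
    simp [Gh, not_lt.mpr hn])]
  rcases Nat.eq_zero_or_pos k with hk | hk
  · subst hk; simp
  have hk0 : (0:ℝ) < k := by exact_mod_cast hk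
  have h1 : ∑ n ∈ range k, Gh (k, n) = ∑ n ∈ Ico 1 k, Gh (k, n) := by
    rw [range_eq_Ico, ← Finset.sum_Ico_consecutive _ (Nat.zero_le 1) (by omega)]
    simp [Gh]
  have h2 : ∀ n ∈ Ico 1 k, Gh (k, n) = ((1:ℝ)/n + 1/(k-n : ℕ)) / (k:ℝ)^2 := by
    intro n hn
    simp only [mem_Ico] at hn
    have hn0 : (0:ℝ) < n := by exact_mod_cast hn.1
    have hkn : 0 < k - n := by omega
    have hkn0 : (0:ℝ) < ((k - n : ℕ) : ℝ) := by exact_mod_cast hkn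
    have hcast : ((k - n : ℕ) : ℝ) = (k:ℝ) - n := by
      push_cast [Nat.cast_sub hn.2.le]; ring
    simp only [Gh, if_pos hn.2]
    rw [hcast] at hkn0 ⊢
    field_simp
    ring
  have h3 : ∑ n ∈ Ico 1 k, (1:ℝ)/((k - n : ℕ):ℝ) = ∑ n ∈ Ico 1 k, (1:ℝ)/n := by
    apply Finset.sum_nbij' (fun n => k - n) (fun n => k - n)
    · intro a ha; simp only [mem_Ico] at ha ⊢; omega
    · intro a ha; simp only [mem_Ico] at ha ⊢; omega
    · intro a ha; simp only [mem_Ico] at ha; omega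
    · intro a ha; simp only [mem_Ico] at ha; omega
    · intro a ha; rfl
  have h4 : ∑ n ∈ Ico 1 k, (1:ℝ)/n = (∑ j ∈ Finset.Icc 1 k, (1:ℝ)/j) - 1/k := by
    have : ∑ j ∈ Finset.Icc 1 k, (1:ℝ)/j = ∑ j ∈ Ico 1 (k+1), (1:ℝ)/j := by
      rw [Finset.Ico_add_one_right_eq_Icc]
    rw [this, Finset.sum_Ico_succ_top (by omega)]
    ring
  rw [h1, Finset.sum_congr rfl h2, ← Finset.sum_div, Finset.sum_add_distrib, h3, h4]
  field_simp
  ring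

theorem euler_harmonic_zeta_three :
    ∑' n : ℕ, (∑ j ∈ Finset.Icc 1 n, (1 : ℝ) / j) / (n : ℝ) ^ 2 =
      2 * ∑' n : ℕ, (1 : ℝ) / (n : ℝ) ^ 3 := by
  set S := ∑' n : ℕ, (∑ j ∈ Finset.Icc 1 n, (1 : ℝ) / j) / (n : ℝ) ^ 2 with hS
  set Z := ∑' n : ℕ, (1 : ℝ) / (n : ℝ) ^ 3 with hZ
  have hψinj : Function.Injective (fun p : ℕ × ℕ => (p.1 + p.2, p.1)) := by
    rintro ⟨a, b⟩ ⟨c, d⟩ h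
    simp only [Prod.mk.injEq] at h
    obtain ⟨h1, h2⟩ := h
    subst h2
    simp only [Prod.mk.injEq]
    exact ⟨trivial, by omega⟩
  have hsupp : Function.support Gh ⊆ Set.range (fun p : ℕ × ℕ => (p.1 + p.2, p.1)) := by
    rintro ⟨k, n⟩ hq
    have hlt : n < k := by
      by_contra h
      exact hq (by simp [Gh, h])
    refine ⟨(n, k - n), ?_⟩
    show (n + (k - n), n) = (k, n)
    simp only [Prod.mk.injEq]
    exact ⟨by omega, trivial⟩
  have hGF : ∀ p : ℕ × ℕ, Gh ((fun p : ℕ × ℕ => (p.1 + p.2, p.1)) p) = Fh p :=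
    fun p => Gh_comp p
  have sG : Summable Gh := by
    rw [← hψinj.summable_iff (fun x hx => Function.notMem_support.mp (fun hs => hx (hsupp hs)))]
    exact summable_Fh.congr fun p => (hGF p).symm
  have h1 : ∑' p : ℕ × ℕ, Fh p = S := by
    rw [Summable.tsum_prod summable_Fh, hS]
    exact tsum_congr inner_Fh
  have h2 : ∑' p : ℕ × ℕ, Fh p = ∑' q : ℕ × ℕ, Gh q := by
    rw [← hψinj.tsum_eq hsupp]
    exact tsum_congr fun p => (hGF p).symm
  have h3 : ∑' q : ℕ × ℕ, Gh q
      = ∑' k : ℕ, (2 * ((∑ j ∈ Finset.Icc 1 k, (1 : ℝ) / j) / (k : ℝ) ^ 2)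
        - 2 / (k : ℝ) ^ 3) := by
    rw [Summable.tsum_prod sG]
    exact tsum_congr inner_Gh
  have sS : Summable (fun n : ℕ => (∑ j ∈ Finset.Icc 1 n, (1 : ℝ) / j) / (n : ℝ) ^ 2) :=
    summable_Fh.prod.congr inner_Fh
  have sZ : Summable (fun k : ℕ => (1:ℝ) / (k:ℝ) ^ 3) :=
    Real.summable_one_div_nat_pow.mpr (by norm_num)
  have h4 : ∑' k : ℕ, (2 * ((∑ j ∈ Finset.Icc 1 k, (1 : ℝ) / j) / (k : ℝ) ^ 2)
      - 2 / (k : ℝ) ^ 3) = 2 * S - 2 * Z := by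
    rw [Summable.tsum_sub (sS.mul_left 2) ((sZ.mul_left 2).congr (fun k => by ring))]
    rw [tsum_mul_left]
    congr 1
    rw [show (fun k : ℕ => 2 / (k:ℝ)^3) = fun k : ℕ => 2 * (1 / (k:ℝ)^3) by
      funext k; ring]
    rw [tsum_mul_left]
  have key : S = 2 * S - 2 * Z := h1.symm.trans (h2.trans (h3.trans h4))
  linarith
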